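/- Let μ be a finite positive Borel measure on 𝕋, x ∈ 𝕋, and suppose limsup_{n→∞} n^{-β} G_n(x) < ∞ for some β ∈ [-1,1], where G_n(x) = ∫ K_{n-1}(x - y) dμ(y). Then for every α < 1 - β, limsup_{r→0} μ([x-r, x+r]) r^{-α} < ∞; i.e., the critical Hölder exponent α_μ(x) satisfies α_μ(x) ≥ 1 - β. -/

import Mathlib

open MeasureTheory Filter
open scoped Real

open Classical in
/-- The Fejér kernel `K_{n-1}(y) = (1/n) (sin(nπy)/sin(πy))²` on the circle,
with value `n` at integer points (the continuous extension). -/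
noncomputable def fejer (n : ℕ) (y : ℝ) : ℝ :=
  if ∃ m : ℤ, y = (m : ℝ) then (n : ℝ)
  else (1 / (n : ℝ)) * (Real.sin (n * π * y) / Real.sin (π * y)) ^ 2

lemma abs_sin_nat_mul_le (n : ℕ) (x : ℝ) : |Real.sin (n * x)| ≤ n * |Real.sin x| := by
  induction n with
  | zero => simp
  | succ k ih =>
    have : ((k+1:ℕ):ℝ) * x = k * x + x := by push_cast; ring
    rw [this, Real.sin_add]
    calc |Real.sin (k*x) * Real.cos x + Real.cos (k*x) * Real.sin x|
        ≤ |Real.sin (k*x) * Real.cos x| + |Real.cos (k*x) * Real.sin x| := abs_add_le _ _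
      _ ≤ |Real.sin (k*x)| * 1 + 1 * |Real.sin x| := by
          rw [abs_mul, abs_mul]
          exact add_le_add (mul_le_mul_of_nonneg_left (Real.abs_cos_le_one x) (abs_nonneg _))
            (mul_le_mul_of_nonneg_right (Real.abs_cos_le_one _) (abs_nonneg _))
      _ ≤ (k:ℝ) * |Real.sin x| + 1 * |Real.sin x| := by
          rw [mul_one]; gcongr
      _ = ((k+1:ℕ):ℝ) * |Real.sin x| := by push_cast; ring

lemma fejer_nonneg (n : ℕ) (y : ℝ) : 0 ≤ fejer n y := by
  unfold fejer; split_ifs <;> positivity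

lemma fejer_le (n : ℕ) (y : ℝ) : fejer n y ≤ n := by
  unfold fejer; split_ifs with hy
  · exact le_refl _
  · rcases Nat.eq_zero_or_pos n with h0 | hn
    · simp [h0]
    have hs : Real.sin (π*y) ≠ 0 := by
      intro hs0
      rw [Real.sin_eq_zero_iff] at hs0
      obtain ⟨m, hm⟩ := hs0
      exact hy ⟨m, by
        have : π * (m:ℝ) = π * y := by linarith [hm]
        exact (mul_left_cancel₀ Real.pi_ne_zero this).symm⟩
    have hkey : (Real.sin ((n:ℝ)*π*y))^2 ≤ (n:ℝ)^2 * (Real.sin (π*y))^2 := by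
      have h2 : |Real.sin ((n:ℝ)*(π*y))| ≤ n * |Real.sin (π*y)| := abs_sin_nat_mul_le n (π*y)
      have h3 := pow_le_pow_left₀ (abs_nonneg _) h2 2
      rw [sq_abs, mul_pow, sq_abs] at h3
      rw [mul_assoc]
      exact h3
    have ht2 : 0 < Real.sin (π*y)^2 := by positivity
    have hnn : (0:ℝ) < n := by exact_mod_cast hn
    have hX : (Real.sin ((n:ℝ)*π*y)/Real.sin (π*y))^2 ≤ (n:ℝ)^2 := by
      rw [div_pow, div_le_iff₀ ht2]; linarith
    calc (1/(n:ℝ)) * (Real.sin ((n:ℝ)*π*y)/Real.sin (π*y))^2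
        ≤ (1/(n:ℝ)) * (n:ℝ)^2 := by gcongr
      _ = (n:ℝ) := by field_simp

lemma fejer_measurable (n : ℕ) : Measurable (fejer n) := by
  unfold fejer
  refine Measurable.ite ?_ measurable_const ?_
  · have : {y : ℝ | ∃ m : ℤ, y = (m:ℝ)} = Set.range (fun m : ℤ => (m:ℝ)) := by
      ext y; simp [Set.mem_range, eq_comm]
    rw [this]
    exact (Set.countable_range _).measurableSet
  · exact measurable_const.mul
      (((Real.measurable_sin.comp (measurable_const.mul measurable_id)).div
        (Real.measurable_sin.comp (measurable_const.mul measurable_id))).pow_const 2)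

lemma fejer_lower (n : ℕ) (hn : 1 ≤ n) {t : ℝ} (ht : |t| ≤ 1/(2*n)) :
    4*n/π^2 ≤ fejer n t := by
  have hπ := Real.pi_pos
  have hπ3 := Real.pi_gt_three
  have hnn : (1:ℝ) ≤ n := by exact_mod_cast hn
  have hnpos : (0:ℝ) < n := by linarith
  unfold fejer; split_ifs with hint
  · -- at integer points the value is n, and 4/π² < 1
    rw [div_le_iff₀ (by positivity)]
    have hπ2 : (9:ℝ) ≤ π^2 := by nlinarith
    nlinarith [mul_le_mul_of_nonneg_left hπ2 hnpos.le]
  · have ht0 : t ≠ 0 := by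
      rintro rfl; exact hint ⟨0, by simp⟩
    set s := |t| with hsdef
    have hs : 0 < s := abs_pos.mpr ht0
    have hs' : s ≤ 1/(2*n) := ht
    have hsin1 : Real.sin (π*t)^2 = Real.sin (π*s)^2 := by
      rcases abs_cases t with ⟨h1, _⟩ | ⟨h1, _⟩
      · rw [hsdef, h1]
      · rw [hsdef, h1, mul_neg, Real.sin_neg, neg_sq]
    have hsin2 : Real.sin ((n:ℝ)*π*t)^2 = Real.sin ((n:ℝ)*π*s)^2 := by
      rcases abs_cases t with ⟨h1, _⟩ | ⟨h1, _⟩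
      · rw [hsdef, h1]
      · rw [hsdef, h1, mul_neg, Real.sin_neg, neg_sq]
    have hle : (n:ℝ)*π*s ≤ π/2 := by
      calc (n:ℝ)*π*s ≤ (n:ℝ)*π*(1/(2*n)) := by gcongr
        _ = π/2 := by field_simp
    have h2 : 2*(n:ℝ)*s ≤ Real.sin ((n:ℝ)*π*s) := by
      have hm := Real.mul_le_sin (x := (n:ℝ)*π*s) (by positivity) hle
      have heq : 2/π*((n:ℝ)*π*s) = 2*(n:ℝ)*s := by field_simp
      linarith [heq ▸ hm]
    have hs1 : s < 1 := by
      have : 1/(2*(n:ℝ)) ≤ 1/2 := by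
        rw [div_le_div_iff₀ (by positivity) (by norm_num)]; linarith
      linarith
    have hspos : 0 < Real.sin (π*s) := by
      apply Real.sin_pos_of_pos_of_lt_pi (by positivity)
      nlinarith
    have hsle : Real.sin (π*s) ≤ π*s := Real.sin_le (by positivity)
    have hratio : 2*(n:ℝ)/π ≤ Real.sin ((n:ℝ)*π*s) / Real.sin (π*s) := by
      rw [le_div_iff₀ hspos]
      calc 2*(n:ℝ)/π * Real.sin (π*s) ≤ 2*(n:ℝ)/π * (π*s) := by gcongr
        _ = 2*(n:ℝ)*s := by field_simp
        _ ≤ Real.sin ((n:ℝ)*π*s) := h2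
    have hsq : (2*(n:ℝ)/π)^2 ≤ (Real.sin ((n:ℝ)*π*s) / Real.sin (π*s))^2 :=
      pow_le_pow_left₀ (by positivity) hratio 2
    have hfrac : (Real.sin ((n:ℝ)*π*t) / Real.sin (π*t))^2
        = (Real.sin ((n:ℝ)*π*s) / Real.sin (π*s))^2 := by
      rw [div_pow, div_pow, hsin1, hsin2]
    rw [hfrac]
    calc 4*(n:ℝ)/π^2 = (1/(n:ℝ)) * (2*(n:ℝ)/π)^2 := by field_simp; ring
      _ ≤ (1/(n:ℝ)) * (Real.sin ((n:ℝ)*π*s) / Real.sin (π*s))^2 := by gcongr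

lemma fejer_integral_key (μ : Measure ℝ) [IsFiniteMeasure μ] (x : ℝ) (n : ℕ) (hn : 1 ≤ n)
    {r : ℝ} (hr : 0 < r) (hr' : r ≤ 1/(2*n)) :
    (μ (Set.Icc (x-r) (x+r))).toReal * (4*n/π^2) ≤ ∫ y, fejer n (x-y) ∂μ := by
  have hmeas : Measurable (fun y => fejer n (x - y)) :=
    (fejer_measurable n).comp (measurable_const.sub measurable_id)
  have hint : Integrable (fun y => fejer n (x-y)) μ := by
    refine (integrable_const (n:ℝ)).mono' hmeas.aestronglyMeasurable ?_
    filter_upwards with y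
    rw [Real.norm_eq_abs, abs_of_nonneg (fejer_nonneg _ _)]
    exact fejer_le _ _
  calc (μ (Set.Icc (x-r) (x+r))).toReal * (4*n/π^2)
      = (4*n/π^2) * (μ (Set.Icc (x-r) (x+r))).toReal := mul_comm _ _
    _ ≤ ∫ y in Set.Icc (x-r) (x+r), fejer n (x-y) ∂μ := by
        apply setIntegral_ge_of_const_le_real measurableSet_Icc (measure_ne_top μ _)
        · intro y hy
          apply fejer_lower n hn
          have : |x - y| ≤ r := abs_le.mpr ⟨by linarith [hy.2], by linarith [hy.1]⟩
          exact this.trans hr'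
        · exact hint.integrableOn
    _ ≤ ∫ y, fejer n (x-y) ∂μ :=
        setIntegral_le_integral hint (Filter.Eventually.of_forall fun y => fejer_nonneg _ _)

/-- If `limsup_n n^{-β} G_n(x) < ∞` for some `β ∈ [-1,1]`, then for every
`α < 1 - β` one has `limsup_{r→0} μ([x-r,x+r]) r^{-α} < ∞`; i.e. the critical
Hölder exponent of `μ` at `x` is at least `1 - β`. The circle is represented
by finite measures on `ℝ` supported on `[0,1)`. -/
theorem stmt10 (μ : Measure ℝ) [IsFiniteMeasure μ]
    (hsupp : μ (Set.Ico (0:ℝ) 1)ᶜ = 0) (x : ℝ) (hx : x ∈ Set.Ico (0:ℝ) 1)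
    (β : ℝ) (hβ : β ∈ Set.Icc (-1 : ℝ) 1)
    (h : ∃ C : ℝ, ∀ᶠ (n : ℕ) in Filter.atTop,
      (n : ℝ) ^ (-β) * ∫ y, fejer n (x - y) ∂μ ≤ C) :
    ∀ α : ℝ, α < 1 - β → ∃ C' : ℝ,
      ∀ᶠ r in nhdsWithin (0:ℝ) (Set.Ioi 0),
        (μ (Set.Icc (x - r) (x + r))).toReal * r ^ (-α) ≤ C' := by
  obtain ⟨C, hC⟩ := h
  rw [eventually_atTop] at hC
  obtain ⟨N, hN⟩ := hC
  set C₀ := max C 0 with hC₀def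
  have hC₀ : 0 ≤ C₀ := le_max_right _ _
  have hπ := Real.pi_pos
  intro α hα
  refine ⟨π^2/4 * C₀ * (4:ℝ)^(1-β), ?_⟩
  set r₀ := min (1/(2*((N:ℝ)+1))) (1/4) with hr₀def
  have hr₀pos : 0 < r₀ := lt_min (by positivity) (by norm_num)
  filter_upwards [Ioo_mem_nhdsGT_of_mem (⟨le_refl (0:ℝ), hr₀pos⟩ : (0:ℝ) ∈ Set.Ico 0 r₀)]
    with r hr
  obtain ⟨hr0, hrlt⟩ := hr
  have hr14 : r ≤ 1/4 := le_of_lt (hrlt.trans_le (min_le_right _ _))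
  have hr1 : r ≤ 1 := by linarith
  have hrN : r ≤ 1/(2*((N:ℝ)+1)) := le_of_lt (hrlt.trans_le (min_le_left _ _))
  set n := ⌊1/(2*r)⌋₊ with hndef
  have hn1 : N + 1 ≤ n := by
    apply Nat.le_floor
    rw [le_div_iff₀ (by positivity)]
    push_cast
    calc ((N:ℝ)+1)*(2*r) ≤ ((N:ℝ)+1)*(2*(1/(2*((N:ℝ)+1)))) := by gcongr
      _ = 1 := by field_simp
  have hnN : N ≤ n := by omega
  have hn0 : 1 ≤ n := by omega
  have hnpos : (0:ℝ) < n := by exact_mod_cast hn0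
  have hfloor_le : (n:ℝ) ≤ 1/(2*r) := Nat.floor_le (by positivity)
  have hrle : r ≤ 1/(2*(n:ℝ)) := by
    rw [le_div_iff₀ (by positivity)]
    rw [le_div_iff₀ (by positivity)] at hfloor_le
    nlinarith
  have hquarter : 1/(4*r) ≤ (n:ℝ) := by
    have hlt := Nat.lt_floor_add_one (1/(2*r))
    rw [← hndef] at hlt
    have heq : 1/(2*r) = 2*(1/(4*r)) := by field_simp; ring
    have h4 : (1:ℝ) ≤ 1/(4*r) := by
      rw [le_div_iff₀ (by positivity)]; linarith
    linarith
  -- bound on the integral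
  have hG := hN n hnN
  have hGn : ∫ y, fejer n (x - y) ∂μ ≤ C₀ * (n:ℝ)^β := by
    have hup : (n:ℝ)^(-β) * ∫ y, fejer n (x - y) ∂μ ≤ C₀ := hG.trans (le_max_left _ _)
    have h1 : ∫ y, fejer n (x - y) ∂μ
        = (n:ℝ)^β * ((n:ℝ)^(-β) * ∫ y, fejer n (x - y) ∂μ) := by
      rw [← mul_assoc, ← Real.rpow_add hnpos]
      simp
    rw [h1, mul_comm C₀ _]
    exact mul_le_mul_of_nonneg_left hup (Real.rpow_nonneg hnpos.le _)
  have hkey := fejer_integral_key μ x n hn0 hr0 hrle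
  have hc : 0 < 4*(n:ℝ)/π^2 := by positivity
  have hμle : (μ (Set.Icc (x-r) (x+r))).toReal ≤ π^2/4 * C₀ * (n:ℝ)^(β-1) := by
    have h1 : (μ (Set.Icc (x-r) (x+r))).toReal ≤ (C₀ * (n:ℝ)^β) / (4*(n:ℝ)/π^2) :=
      (le_div_iff₀ hc).mpr (hkey.trans hGn)
    have heq : (C₀ * (n:ℝ)^β) / (4*(n:ℝ)/π^2) = π^2/4 * C₀ * (n:ℝ)^(β-1) := by
      rw [Real.rpow_sub hnpos, Real.rpow_one]
      field_simp
    rwa [heq] at h1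
  -- bound n^(β-1)
  have hβ1 : β - 1 ≤ 0 := by linarith [hβ.2]
  have hn_le : (n:ℝ)^(β-1) ≤ (4:ℝ)^(1-β) * r^(1-β) := by
    have h1 : (n:ℝ)^(β-1) ≤ (1/(4*r))^(β-1) :=
      Real.rpow_le_rpow_of_nonpos (by positivity) hquarter hβ1
    have h2 : (1/(4*r))^(β-1) = (4*r)^(1-β) := by
      rw [one_div, Real.inv_rpow (by positivity), ← Real.rpow_neg (by positivity)]
      congr 1
      ring
    have h3 : (4*r)^(1-β) = (4:ℝ)^(1-β) * r^(1-β) :=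
      Real.mul_rpow (by norm_num) hr0.le
    rw [h2, h3] at h1
    exact h1
  have hrpow : (0:ℝ) ≤ r^(-α) := Real.rpow_nonneg hr0.le _
  calc (μ (Set.Icc (x-r) (x+r))).toReal * r^(-α)
      ≤ (π^2/4 * C₀ * (n:ℝ)^(β-1)) * r^(-α) := mul_le_mul_of_nonneg_right hμle hrpow
    _ ≤ (π^2/4 * C₀ * ((4:ℝ)^(1-β) * r^(1-β))) * r^(-α) :=
        mul_le_mul_of_nonneg_right (mul_le_mul_of_nonneg_left hn_le (by positivity)) hrpow
    _ = π^2/4 * C₀ * (4:ℝ)^(1-β) * (r^(1-β) * r^(-α)) := by ring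
    _ = π^2/4 * C₀ * (4:ℝ)^(1-β) * r^(1-β-α) := by
        rw [← Real.rpow_add hr0, show (1-β) + -α = 1-β-α from by ring]
    _ ≤ π^2/4 * C₀ * (4:ℝ)^(1-β) * 1 :=
        mul_le_mul_of_nonneg_left (Real.rpow_le_one hr0.le hr1 (by linarith)) (by positivity)
    _ = π^2/4 * C₀ * (4:ℝ)^(1-β) := mul_one _
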